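/- Let f ∈ L^1[0,1] and let I, J, K be dyadic intervals (or [0,2]) with K ⊊ J ⊊ I. Then ∫_{I \setminus K} |f| dx ≥ | |c_I(f)| − |c_J(f)| | / 4, where c_L(f) denotes the Haar coefficient of f at L. -/

import Mathlib

open MeasureTheory Set
open scoped Classical

noncomputable section

/-- The dyadic interval `[k/2^n, (k+1)/2^n)`. -/
def dyadic (n k : ℕ) : Set ℝ := Set.Ico ((k : ℝ) / 2 ^ n) (((k : ℝ) + 1) / 2 ^ n)

/-- Left half `I⁺` of a dyadic interval. -/
def dplus (n k : ℕ) : Set ℝ := dyadic (n + 1) (2 * k)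

/-- Right half `I⁻` of a dyadic interval. -/
def dminus (n k : ℕ) : Set ℝ := dyadic (n + 1) (2 * k + 1)

/-- Haar coefficient `c_I(f)` with respect to the L¹-normalized Haar system. -/
def haarC (f : ℝ → ℝ) (n k : ℕ) : ℝ :=
  (∫ x in dplus n k, f x) - ∫ x in dminus n k, f x

/-- The L¹-normalized Haar function `h_I`. -/
def haarF (n k : ℕ) : ℝ → ℝ := fun x =>
  if x ∈ dplus n k then (2 : ℝ) ^ n else if x ∈ dminus n k then -(2 : ℝ) ^ n else 0

/-- Index set for the Haar system: the dyadic intervals of `[0,1]` together with `[0,2]`. -/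
inductive HIdx where
  | root : HIdx
  | node : ℕ → ℕ → HIdx
  deriving DecidableEq

/-- Validity of an index: `node n k` encodes `[k/2^n, (k+1)/2^n) ⊆ [0,1)`. -/
def HIdx.valid : HIdx → Prop
  | .root => True
  | .node n k => k < 2 ^ n

/-- The interval encoded by an index. -/
def HIdx.iset : HIdx → Set ℝ
  | .root => Set.Ico (0 : ℝ) 2
  | .node n k => dyadic n k

/-- Haar coefficient, where `c_{[0,2]}(f) = ∫_{[0,1)} f` (for `f` supported in `[0,1)`). -/
def hcoef (f : ℝ → ℝ) : HIdx → ℝ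
  | .root => ∫ x in Set.Ico (0 : ℝ) 1, f x
  | .node n k => haarC f n k

lemma two_pow_pos' (n : ℕ) : (0:ℝ) < 2 ^ n := by positivity

lemma dyadic_nonempty (n k : ℕ) : (dyadic n k).Nonempty := by
  refine Set.nonempty_Ico.2 ?_
  rw [div_lt_div_iff_of_pos_right (two_pow_pos' n)]
  linarith

lemma dplus_union_dminus (n k : ℕ) : dplus n k ∪ dminus n k = dyadic n k := by
  unfold dplus dminus dyadic
  have h2 : (0:ℝ) < 2^(n+1) := two_pow_pos' _
  have hn : (0:ℝ) < 2^n := two_pow_pos' n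
  have e1 : ((2*k:ℕ):ℝ)/2^(n+1) = (k:ℝ)/2^n := by push_cast; field_simp; ring
  have e2 : (((2*k:ℕ):ℝ)+1)/2^(n+1) = ((2*k+1:ℕ):ℝ)/2^(n+1) := by push_cast; ring
  have e3 : (((2*k+1:ℕ):ℝ)+1)/2^(n+1) = ((k:ℝ)+1)/2^n := by push_cast; field_simp; ring
  rw [e1, e2, e3]
  rw [← e2, ← e1, ← e3]
  apply Set.Ico_union_Ico_eq_Ico
  · rw [div_le_div_iff_of_pos_right h2]; push_cast; linarith
  · rw [div_le_div_iff_of_pos_right h2]; push_cast; linarith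

lemma disjoint_dyadic {n a b : ℕ} (h : a ≠ b) : Disjoint (dyadic n a) (dyadic n b) := by
  have key : ∀ a b : ℕ, a < b → Disjoint (dyadic n a) (dyadic n b) := by
    intro a b hab
    refine Set.Ico_disjoint_Ico.2 ?_
    have h1 : ((a:ℝ)+1)/2^n ≤ (b:ℝ)/2^n := by
      rw [div_le_div_iff_of_pos_right (two_pow_pos' n)]
      have : (a:ℝ)+1 ≤ b := by exact_mod_cast hab
      linarith
    calc min (((a:ℝ)+1)/2^n) (((b:ℝ)+1)/2^n) ≤ ((a:ℝ)+1)/2^n := min_le_left _ _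
      _ ≤ (b:ℝ)/2^n := h1
      _ ≤ max ((a:ℝ)/2^n) ((b:ℝ)/2^n) := le_max_right _ _
  rcases Nat.lt_or_ge a b with hab | hab
  · exact key a b hab
  · exact (key b a (by omega)).symm

lemma dyadic_subset_div {m n j : ℕ} (h : n ≤ m) :
    dyadic m j ⊆ dyadic n (j / 2 ^ (m - n)) := by
  obtain ⟨d, rfl⟩ : ∃ d, m = n + d := ⟨m - n, by omega⟩
  have hd : n + d - n = d := by omega
  rw [hd]
  set q := j / 2 ^ d with hq
  have h1 : q * 2 ^ d ≤ j := Nat.div_mul_le_self j _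
  have h2 : j + 1 ≤ (q + 1) * 2 ^ d := by
    have hpos : 0 < 2 ^ d := by positivity
    have : j < (q + 1) * 2 ^ d := (Nat.div_lt_iff_lt_mul hpos).1 (by omega)
    omega
  unfold dyadic
  have hpn : (0:ℝ) < 2 ^ n := two_pow_pos' n
  have hpm : (0:ℝ) < 2 ^ (n + d) := two_pow_pos' _
  have hpd : (0:ℝ) < 2 ^ d := two_pow_pos' d
  have hr1 : ((q:ℝ)) * 2 ^ d ≤ (j:ℝ) := by exact_mod_cast h1
  have hr2 : (j:ℝ) + 1 ≤ ((q:ℝ) + 1) * 2 ^ d := by exact_mod_cast h2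
  apply Set.Ico_subset_Ico
  · rw [div_le_div_iff₀ hpn hpm, pow_add]; nlinarith
  · rw [div_le_div_iff₀ hpm hpn, pow_add]; nlinarith

lemma dyadic_subset_endpoints {m j n k : ℕ} (h : dyadic m j ⊆ dyadic n k) :
    (k:ℝ)/2^n ≤ (j:ℝ)/2^m ∧ ((j:ℝ)+1)/2^m ≤ ((k:ℝ)+1)/2^n := by
  have hne : (j:ℝ)/2^m < ((j:ℝ)+1)/2^m := by
    rw [div_lt_div_iff_of_pos_right (two_pow_pos' m)]; linarith
  rw [dyadic, dyadic, Set.Ico_subset_Ico_iff hne] at h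
  exact ⟨h.1, h.2⟩

lemma dyadic_ssubset_level {m j n k : ℕ} (h : dyadic m j ⊂ dyadic n k) : n < m := by
  obtain ⟨h1, h2⟩ := dyadic_subset_endpoints h.subset
  by_contra hc
  push_neg at hc
  -- m ≤ n : lengths 1/2^m ≥ 1/2^n, then intervals equal
  have hle : (2:ℝ)^m ≤ 2^n := by
    apply pow_le_pow_right₀ (by norm_num) hc
  have hpn : (0:ℝ) < 2 ^ n := two_pow_pos' n
  have hpm : (0:ℝ) < 2 ^ m := two_pow_pos' m
  -- 1/2^n ≤ 1/2^m, so from h1,h2 : endpoints coincide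
  have hlen : (1:ℝ)/2^n ≤ 1/2^m := by
    apply div_le_div_of_nonneg_left (by norm_num) hpm hle
  have ak : ((k:ℝ)+1)/2^n = (k:ℝ)/2^n + 1/2^n := add_div _ _ _
  have aj : ((j:ℝ)+1)/2^m = (j:ℝ)/2^m + 1/2^m := add_div _ _ _
  have e1 : (k:ℝ)/2^n = (j:ℝ)/2^m := by linarith
  have e2 : ((j:ℝ)+1)/2^m = ((k:ℝ)+1)/2^n := by linarith
  have : dyadic m j = dyadic n k := by
    unfold dyadic; rw [e1, e2]
  exact h.ne this

lemma dyadic_unique_level {m j n k k' : ℕ} (h1 : dyadic m j ⊆ dyadic n k)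
    (h2 : dyadic m j ⊆ dyadic n k') : k = k' := by
  by_contra hc
  obtain ⟨x, hx⟩ := dyadic_nonempty m j
  exact (disjoint_dyadic hc).ne_of_mem (h1 hx) (h2 hx) rfl

lemma dyadic_ssubset_half {m j n k : ℕ} (h : dyadic m j ⊂ dyadic n k) :
    dyadic m j ⊆ dplus n k ∨ dyadic m j ⊆ dminus n k := by
  have hlt : n < m := dyadic_ssubset_level h
  have hle : n + 1 ≤ m := hlt
  set q := j / 2 ^ (m - (n + 1)) with hq
  have hsub1 : dyadic m j ⊆ dyadic (n + 1) q := dyadic_subset_div hle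
  have hsub2 : dyadic (n + 1) q ⊆ dyadic n (q / 2) := by
    have := dyadic_subset_div (m := n + 1) (n := n) (j := q) (by omega)
    simpa using this
  have hk : k = q / 2 := dyadic_unique_level h.subset (hsub1.trans hsub2)
  rcases Nat.even_or_odd q with he | ho
  · left
    obtain ⟨r, hr⟩ := he
    have : q = 2 * k := by omega
    rw [dplus, ← this]; exact hsub1
  · right
    obtain ⟨r, hr⟩ := ho
    have : q = 2 * k + 1 := by omega
    rw [dminus, ← this]; exact hsub1

lemma dyadic_subset_Ico01 {n k : ℕ} (h : k < 2 ^ n) : dyadic n k ⊆ Set.Ico (0:ℝ) 1 := by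
  unfold dyadic
  apply Set.Ico_subset_Ico
  · positivity
  · rw [div_le_one (two_pow_pos' n)]
    have : (k:ℝ) + 1 ≤ 2 ^ n := by exact_mod_cast h
    exact_mod_cast this

lemma disjoint_dplus_dminus (n k : ℕ) : Disjoint (dplus n k) (dminus n k) :=
  disjoint_dyadic (by omega)

section analytic
variable {f : ℝ → ℝ}

lemma abs_setInt (s : Set ℝ) : |∫ x in s, f x| ≤ ∫ x in s, |f x| := by
  have := norm_integral_le_integral_norm (μ := volume.restrict s) f
  simpa [Real.norm_eq_abs] using this

lemma mono_setInt (hf : Integrable f) {s t : Set ℝ} (hst : s ⊆ t) :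
    ∫ x in s, |f x| ≤ ∫ x in t, |f x| := by
  apply setIntegral_mono_set (hf.abs.integrableOn)
    (Filter.Eventually.of_forall fun x => abs_nonneg _)
    (HasSubset.Subset.eventuallyLE hst)

lemma sum_setInt_le (hf : Integrable f) {s t u : Set ℝ} (hs : MeasurableSet s) (ht : MeasurableSet t)
    (hd : Disjoint s t) (hsu : s ∪ t ⊆ u) :
    (∫ x in s, |f x|) + ∫ x in t, |f x| ≤ ∫ x in u, |f x| := by
  rw [← setIntegral_union hd ht hf.abs.integrableOn hf.abs.integrableOn]
  exact mono_setInt hf hsu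

lemma split_setInt (hf : Integrable f) {s t : Set ℝ} (ht : MeasurableSet t) (hts : t ⊆ s) :
    ∫ x in s, f x = (∫ x in t, f x) + ∫ x in s \ t, f x := by
  rw [integral_diff ht hf.integrableOn hts]; ring

end analytic

/-- If `K ⊊ J ⊊ I` then `∫_{I∖K} |f| ≥ ||c_I(f)| − |c_J(f)||/4`. -/
theorem stmt3 (f : ℝ → ℝ) (hf : Integrable f)
    (hsupp : ∀ x, x ∉ Set.Ico (0 : ℝ) 1 → f x = 0)
    (I J K : HIdx) (hI : I.valid) (hJ : J.valid) (hK : K.valid)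
    (hKJ : K.iset ⊂ J.iset) (hJI : J.iset ⊂ I.iset) :
    |(|hcoef f I| - |hcoef f J|)| / 4 ≤ ∫ x in I.iset \ K.iset, |f x| := by
  have not_root_lt : ∀ (L : HIdx), L.valid → ¬ (Set.Ico (0:ℝ) 2 ⊂ L.iset) := by
    rintro (_ | ⟨n, k⟩) hv h
    · exact h.ne rfl
    · have h32 : (3/2 : ℝ) ∈ Set.Ico (0:ℝ) 2 := by norm_num
      have := dyadic_subset_Ico01 hv (h.subset h32)
      simp only [Set.mem_Ico] at this
      linarith [this.2]
  cases J with
  | root => exact absurd hJI (not_root_lt I hI)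
  | node m j =>
  cases K with
  | root =>
      exact absurd (hKJ.trans_subset (dyadic_subset_Ico01 hJ |>.trans (Set.Ico_subset_Ico_right (by norm_num))))
        (not_root_lt HIdx.root trivial)
  | node p q =>
  -- Notation
  set S : ℝ := ∫ x in dyadic m j, f x with hS
  set cJ : ℝ := haarC f m j with hcJ
  set A : ℝ := ∫ x in I.iset \ dyadic p q, |f x| with hA
  have hmI : MeasurableSet I.iset := by
    cases I with
    | root => exact measurableSet_Ico
    | node n k => exact measurableSet_Ico
  have hA0 : 0 ≤ A := setIntegral_nonneg (hmI.diff measurableSet_Ico) (fun x _ => abs_nonneg _)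
  have hKJ' : dyadic p q ⊂ dyadic m j := hKJ
  have hJI' : dyadic m j ⊆ I.iset := hJI.subset
  -- split S into halves
  have hSsplit : S = (∫ x in dplus m j, f x) + ∫ x in dminus m j, f x := by
    rw [hS, ← dplus_union_dminus m j,
      setIntegral_union (disjoint_dplus_dminus m j) measurableSet_Ico
        hf.integrableOn hf.integrableOn]
  -- Claim B : ||S| - |cJ|| ≤ 2 * A
  have hB : |(|S| - |cJ|)| ≤ 2 * A := by
    rcases dyadic_ssubset_half hKJ' with hKp | hKm
    · -- K ⊆ J⁺, so J⁻ ⊆ I \ K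
      have hsub : dminus m j ⊆ I.iset \ dyadic p q := by
        intro x hx
        refine ⟨hJI' (by rw [← dplus_union_dminus m j]; exact Or.inr hx), fun hxK => ?_⟩
        exact (disjoint_dplus_dminus m j).ne_of_mem (hKp hxK) hx rfl
      have h1 : |∫ x in dminus m j, f x| ≤ A :=
        le_trans (abs_setInt _) (mono_setInt hf hsub)
      have h2 : |S - cJ| ≤ 2 * A := by
        have : S - cJ = 2 * ∫ x in dminus m j, f x := by
          rw [hSsplit, hcJ, haarC]; ring
        rw [this, abs_mul]
        simp only [abs_two]
        linarith
      exact le_trans (abs_abs_sub_abs_le_abs_sub _ _) h2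
    · -- K ⊆ J⁻, so J⁺ ⊆ I \ K
      have hsub : dplus m j ⊆ I.iset \ dyadic p q := by
        intro x hx
        refine ⟨hJI' (by rw [← dplus_union_dminus m j]; exact Or.inl hx), fun hxK => ?_⟩
        exact (disjoint_dplus_dminus m j).ne_of_mem hx (hKm hxK) rfl
      have h1 : |∫ x in dplus m j, f x| ≤ A :=
        le_trans (abs_setInt _) (mono_setInt hf hsub)
      have h2 : |S - -cJ| ≤ 2 * A := by
        have : S - -cJ = 2 * ∫ x in dplus m j, f x := by
          rw [hSsplit, hcJ, haarC]; ring
        rw [this, abs_mul]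
        simp only [abs_two]
        linarith
      calc |(|S| - |cJ|)| = |(|S| - |-cJ|)| := by rw [abs_neg]
        _ ≤ |S - -cJ| := abs_abs_sub_abs_le_abs_sub _ _
        _ ≤ 2 * A := h2
  -- Claim A : ||cI| - |S|| ≤ A
  have hKsubJ : dyadic p q ⊆ dyadic m j := hKJ'.subset
  have hAclaim : |(|hcoef f I| - |S|)| ≤ A := by
    cases I with
    | root =>
        have hJ01 : dyadic m j ⊆ Set.Ico (0:ℝ) 1 := dyadic_subset_Ico01 hJ
        have hsplit : (∫ x in Set.Ico (0:ℝ) 1, f x) =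
            (∫ x in dyadic m j, f x) + ∫ x in Set.Ico (0:ℝ) 1 \ dyadic m j, f x :=
          split_setInt hf measurableSet_Ico hJ01
        have hsub : Set.Ico (0:ℝ) 1 \ dyadic m j ⊆ HIdx.iset HIdx.root \ dyadic p q := by
          rintro x ⟨hx1, hx2⟩
          exact ⟨Set.Ico_subset_Ico_right (by norm_num) hx1, fun hxK => hx2 (hKsubJ hxK)⟩
        have h1 : |hcoef f HIdx.root - S| ≤ A := by
          have : hcoef f HIdx.root - S = ∫ x in Set.Ico (0:ℝ) 1 \ dyadic m j, f x := by
            rw [show hcoef f HIdx.root = ∫ x in Set.Ico (0:ℝ) 1, f x from rfl, hsplit, hS]; ring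
          rw [this]
          exact le_trans (abs_setInt _) (mono_setInt hf hsub)
        exact le_trans (abs_abs_sub_abs_le_abs_sub _ _) h1
    | node n k =>
        have hJI'' : dyadic m j ⊂ dyadic n k := hJI
        have hcI : hcoef f (HIdx.node n k) =
            (∫ x in dplus n k, f x) - ∫ x in dminus n k, f x := rfl
        rcases dyadic_ssubset_half hJI'' with hJp | hJm
        · -- J ⊆ I⁺ : cI - S = ∫_{I⁺\J} f - ∫_{I⁻} f
          have hsplit : (∫ x in dplus n k, f x) =
            (∫ x in dyadic m j, f x) + ∫ x in dplus n k \ dyadic m j, f x :=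
          split_setInt hf measurableSet_Ico hJp
          have hUsub : (dplus n k \ dyadic m j) ∪ dminus n k ⊆ dyadic n k \ dyadic p q := by
            rintro x (⟨hx1, hx2⟩ | hx)
            · refine ⟨(by rw [← dplus_union_dminus n k]; exact Or.inl hx1),
                fun hxK => hx2 (hKsubJ hxK)⟩
            · refine ⟨(by rw [← dplus_union_dminus n k]; exact Or.inr hx),
                fun hxK => ?_⟩
              exact (disjoint_dplus_dminus n k).ne_of_mem (hJp (hKsubJ hxK)) hx rfl
          have hsum := sum_setInt_le hf (f := f) (measurableSet_Ico.diff measurableSet_Ico)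
            measurableSet_Ico
            (Disjoint.mono_left Set.diff_subset (disjoint_dplus_dminus n k)) hUsub
          have h1 : |hcoef f (HIdx.node n k) - S| ≤ A := by
            have heq : hcoef f (HIdx.node n k) - S =
                (∫ x in dplus n k \ dyadic m j, f x) - ∫ x in dminus n k, f x := by
              rw [hcI, hsplit, hS]; ring
            rw [heq]
            calc |(∫ x in dplus n k \ dyadic m j, f x) - ∫ x in dminus n k, f x|
                ≤ |∫ x in dplus n k \ dyadic m j, f x| + |∫ x in dminus n k, f x| :=
                  abs_sub _ _
              _ ≤ (∫ x in dplus n k \ dyadic m j, |f x|) + ∫ x in dminus n k, |f x| :=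
                  add_le_add (abs_setInt _) (abs_setInt _)
              _ ≤ ∫ x in dyadic n k \ dyadic p q, |f x| := hsum
              _ = A := rfl
          exact le_trans (abs_abs_sub_abs_le_abs_sub _ _) h1
        · -- J ⊆ I⁻ : cI + S = ∫_{I⁺} f - ∫_{I⁻\J} f
          have hsplit : (∫ x in dminus n k, f x) =
            (∫ x in dyadic m j, f x) + ∫ x in dminus n k \ dyadic m j, f x :=
          split_setInt hf measurableSet_Ico hJm
          have hUsub : dplus n k ∪ (dminus n k \ dyadic m j) ⊆ dyadic n k \ dyadic p q := by
            rintro x (hx | ⟨hx1, hx2⟩)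
            · refine ⟨(by rw [← dplus_union_dminus n k]; exact Or.inl hx),
                fun hxK => ?_⟩
              exact (disjoint_dplus_dminus n k).ne_of_mem hx (hJm (hKsubJ hxK)) rfl
            · refine ⟨(by rw [← dplus_union_dminus n k]; exact Or.inr hx1),
                fun hxK => hx2 (hKsubJ hxK)⟩
          have hsum := sum_setInt_le hf (f := f) measurableSet_Ico
            (measurableSet_Ico.diff measurableSet_Ico)
            (Disjoint.mono_right Set.diff_subset (disjoint_dplus_dminus n k)) hUsub
          have h1 : |hcoef f (HIdx.node n k) - -S| ≤ A := by
            have heq : hcoef f (HIdx.node n k) - -S =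
                (∫ x in dplus n k, f x) - ∫ x in dminus n k \ dyadic m j, f x := by
              rw [hcI, hsplit, hS]; ring
            rw [heq]
            calc |(∫ x in dplus n k, f x) - ∫ x in dminus n k \ dyadic m j, f x|
                ≤ |∫ x in dplus n k, f x| + |∫ x in dminus n k \ dyadic m j, f x| :=
                  abs_sub _ _
              _ ≤ (∫ x in dplus n k, |f x|) + ∫ x in dminus n k \ dyadic m j, |f x| :=
                  add_le_add (abs_setInt _) (abs_setInt _)
              _ ≤ ∫ x in dyadic n k \ dyadic p q, |f x| := hsum
              _ = A := rfl
          calc |(|hcoef f (HIdx.node n k)| - |S|)|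
              = |(|hcoef f (HIdx.node n k)| - |-S|)| := by rw [abs_neg]
            _ ≤ |hcoef f (HIdx.node n k) - -S| := abs_abs_sub_abs_le_abs_sub _ _
            _ ≤ A := h1
  -- Conclusion
  have hfin := abs_sub_le (|hcoef f I|) (|S|) (|hcoef f (HIdx.node m j)|)
  have : hcoef f (HIdx.node m j) = cJ := rfl
  rw [this] at hfin
  have : |(|hcoef f I| - |cJ|)| ≤ 3 * A := by linarith
  show |(|hcoef f I| - |hcoef f (HIdx.node m j)|)| / 4 ≤ A
  have hcc : hcoef f (HIdx.node m j) = cJ := rfl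
  rw [hcc]
  linarith
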